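/- Let v : ℝ² → ℝ be C¹ on an open neighborhood of [0,1]² and let δ, ε > 0. Then ∫_{[0,1]²} e^{−δx₂/ε}·|v(x)| dx ≤ (ε/δ)·( ∫_{[0,1]²} |v(x)| dx + ∫_{[0,1]²} |∂₂v(x)| dx ). -/

import Mathlib

open MeasureTheory Set

/-- second partial derivative of a function on `ℝ²` -/
noncomputable def pd2 (u : ℝ × ℝ → ℝ) (x : ℝ × ℝ) : ℝ := fderiv ℝ u x (0, 1)

lemma exp_int_le (c : ℝ) (hc : 0 < c) :
    ∫ s in Set.Icc (0:ℝ) 1, Real.exp (-c * s) ≤ 1 / c := by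
  have hderiv : ∀ s ∈ Set.uIcc (0:ℝ) 1,
      HasDerivAt (fun t => -(Real.exp (-c * t)) / c) (Real.exp (-c * s)) s := by
    intro s _
    have h1 : HasDerivAt (fun t : ℝ => -c * t) (-c) s := by
      simpa using (hasDerivAt_id s).const_mul (-c)
    have h2 := (Real.hasDerivAt_exp (-c * s)).comp s h1
    have h3 := (h2.const_mul (-(1/c)))
    convert h3 using 1
    · rfl
    · rfl
    · ext t; simp only [Function.comp_apply]; field_simp
    · field_simp
  have hint : IntervalIntegrable (fun s => Real.exp (-c * s)) volume 0 1 :=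
    (Real.continuous_exp.comp (continuous_const.mul continuous_id)).intervalIntegrable 0 1
  have heq := intervalIntegral.integral_eq_sub_of_hasDerivAt hderiv hint
  have hIcc : ∫ s in Set.Icc (0:ℝ) 1, Real.exp (-c * s)
      = ∫ s in (0:ℝ)..1, Real.exp (-c * s) := by
    rw [intervalIntegral.integral_of_le (by norm_num : (0:ℝ) ≤ 1),
      MeasureTheory.integral_Icc_eq_integral_Ioc]
  rw [hIcc, heq]
  have h2 : Real.exp (-c * 0) = 1 := by norm_num
  rw [h2]
  have h3 : -Real.exp (-c * 1) / c - -1 / c = (1 - Real.exp (-c * 1)) / c := by ring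
  rw [h3, div_le_div_iff₀ hc hc]
  nlinarith [Real.exp_pos (-c * 1)]

/-- The exponentially weighted `L¹` estimate used in the proof of Theorem 3.7 of
the paper: integrating a trace-type inequality against the exponential weight
`e^{−δx₂/ε}` produces the factor `ε/δ`. -/
theorem weighted_L1_estimate
    (v : ℝ × ℝ → ℝ) (U : Set (ℝ × ℝ)) (hU : IsOpen U)
    (hUc : Set.Icc (0:ℝ) 1 ×ˢ Set.Icc (0:ℝ) 1 ⊆ U)
    (hv : ContDiffOn ℝ 1 v U) (δ ε : ℝ) (hδ : 0 < δ) (hε : 0 < ε) :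
    (∫ x in Set.Icc (0:ℝ) 1 ×ˢ Set.Icc (0:ℝ) 1,
        Real.exp (-δ * x.2 / ε) * |v x|) ≤
      (ε / δ) * ((∫ x in Set.Icc (0:ℝ) 1 ×ˢ Set.Icc (0:ℝ) 1, |v x|) +
        ∫ x in Set.Icc (0:ℝ) 1 ×ˢ Set.Icc (0:ℝ) 1, |pd2 v x|) := by
  set I : Set ℝ := Set.Icc (0:ℝ) 1 with hI
  set K : Set (ℝ × ℝ) := I ×ˢ I with hKdef
  have hKc : IsCompact K := isCompact_Icc.prod isCompact_Icc
  have hvcont : ContinuousOn v U := hv.continuousOn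
  have hfd : ContinuousOn (fderiv ℝ v) U :=
    hv.continuousOn_fderiv_of_isOpen hU le_rfl
  have hpcont : ContinuousOn (pd2 v) U := hfd.clm_apply continuousOn_const
  -- continuity on K
  have hvK : ContinuousOn v K := hvcont.mono hUc
  have hpK : ContinuousOn (pd2 v) K := hpcont.mono hUc
  have hwK : ContinuousOn (fun x : ℝ × ℝ => Real.exp (-δ * x.2 / ε) * |v x|) K :=
    ((Real.continuous_exp.comp ((continuous_const.mul continuous_snd).div_const ε))).continuousOn.mul hvK.abs
  -- integrability on K
  have hIexp : IntegrableOn (fun x : ℝ × ℝ => Real.exp (-δ * x.2 / ε) * |v x|) K :=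
    hwK.integrableOn_compact hKc
  have hIv : IntegrableOn (fun x : ℝ × ℝ => |v x|) K := hvK.abs.integrableOn_compact hKc
  have hIp : IntegrableOn (fun x : ℝ × ℝ => |pd2 v x|) K := hpK.abs.integrableOn_compact hKc
  -- rewrite volume as product measure
  have hvol : (volume : Measure (ℝ × ℝ)) = (volume : Measure ℝ).prod volume :=
    Measure.volume_eq_prod ℝ ℝ
  -- slice continuity
  have hsliceV : ∀ x₁ ∈ I, ContinuousOn (fun t => v (x₁, t)) I := by
    intro x₁ hx₁
    exact hvK.comp (continuous_const.prodMk continuous_id).continuousOn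
      (fun t ht => Set.mk_mem_prod hx₁ ht)
  have hsliceP : ∀ x₁ ∈ I, ContinuousOn (fun t => pd2 v (x₁, t)) I := by
    intro x₁ hx₁
    exact hpK.comp (continuous_const.prodMk continuous_id).continuousOn
      (fun t ht => Set.mk_mem_prod hx₁ ht)
  -- the trace inequality
  have key : ∀ x₁ ∈ I, ∀ x₂ ∈ I,
      |v (x₁, x₂)| ≤ (∫ t in I, |v (x₁, t)|) + ∫ s in I, |pd2 v (x₁, s)| := by
    intro x₁ hx₁ x₂ hx₂
    set Cp : ℝ := ∫ s in I, |pd2 v (x₁, s)| with hCp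
    have hIpabs : IntegrableOn (fun s => |pd2 v (x₁, s)|) I :=
      ((hsliceP x₁ hx₁).abs).integrableOn_compact isCompact_Icc
    have hstep : ∀ t ∈ I, |v (x₁, x₂)| ≤ |v (x₁, t)| + Cp := by
      intro t ht
      -- FTC on the slice
      have hderiv : ∀ s ∈ Set.uIcc t x₂,
          HasDerivAt (fun r => v (x₁, r)) (pd2 v (x₁, s)) s := by
        intro s hs
        have hsI : s ∈ I := Set.uIcc_subset_Icc ht hx₂ hs
        have hmem : (x₁, s) ∈ U := hUc (Set.mk_mem_prod hx₁ hsI)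
        have hdiff : DifferentiableAt ℝ v (x₁, s) :=
          (hv.differentiableOn one_ne_zero).differentiableAt (hU.mem_nhds hmem)
        have hcurve : HasDerivAt (fun r : ℝ => ((x₁, r) : ℝ × ℝ)) ((0 : ℝ), (1 : ℝ)) s :=
          (hasDerivAt_const s x₁).prodMk (hasDerivAt_id s)
        exact hdiff.hasFDerivAt.comp_hasDerivAt s hcurve
      have hintI : IntervalIntegrable (fun s => pd2 v (x₁, s)) volume t x₂ :=
        ((hsliceP x₁ hx₁).mono (Set.uIcc_subset_Icc ht hx₂)).intervalIntegrable
      have hFTC := intervalIntegral.integral_eq_sub_of_hasDerivAt hderiv hintI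
      have habs : |∫ s in t..x₂, pd2 v (x₁, s)| ≤ Cp := by
        calc |∫ s in t..x₂, pd2 v (x₁, s)|
            ≤ ∫ s in Set.uIoc t x₂, |pd2 v (x₁, s)| := by
              simpa [Real.norm_eq_abs] using
                (intervalIntegral.norm_integral_le_integral_norm_uIoc
                  (f := fun s => pd2 v (x₁, s)) (a := t) (b := x₂) (μ := volume))
          _ ≤ Cp := by
              apply setIntegral_mono_set hIpabs
              · exact Filter.Eventually.of_forall fun s => abs_nonneg _
              · exact HasSubset.Subset.eventuallyLE
                  ((Set.uIoc_subset_uIcc).trans (Set.uIcc_subset_Icc ht hx₂))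
      have : |v (x₁, x₂)| ≤ |v (x₁, t)| + |v (x₁, x₂) - v (x₁, t)| := by
        have := abs_sub_abs_le_abs_sub (v (x₁, x₂)) (v (x₁, t))
        linarith [abs_nonneg (v (x₁, x₂) - v (x₁, t))]
      rw [← hFTC] at this
      linarith [habs]
    -- integrate over t
    have hIvabs : IntegrableOn (fun t => |v (x₁, t)| + Cp) I :=
      (((hsliceV x₁ hx₁).abs).integrableOn_compact isCompact_Icc).add
        (integrableOn_const (by simp [hI]))
    have hconst : |v (x₁, x₂)| = ∫ _ in I, |v (x₁, x₂)| := by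
      rw [setIntegral_const]
      simp [hI, Real.volume_Icc]
    rw [hconst]
    have := setIntegral_mono_on
      (integrableOn_const (by simp [hI])) hIvabs measurableSet_Icc hstep
    calc (∫ _ in I, |v (x₁, x₂)|) ≤ ∫ t in I, (|v (x₁, t)| + Cp) := this
      _ = (∫ t in I, |v (x₁, t)|) + ∫ _ in I, Cp := by
          rw [integral_add (((hsliceV x₁ hx₁).abs).integrableOn_compact isCompact_Icc)
            (integrableOn_const (by simp [hI]))]
      _ = (∫ t in I, |v (x₁, t)|) + Cp := by
          rw [setIntegral_const]; simp [hI, Real.volume_Icc]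
  -- define F
  set F : ℝ → ℝ := fun x₁ => (∫ t in I, |v (x₁, t)|) + ∫ s in I, |pd2 v (x₁, s)| with hF
  have hFnonneg : ∀ x₁, 0 ≤ F x₁ := by
    intro x₁
    have h1 : 0 ≤ ∫ t in I, |v (x₁, t)| := setIntegral_nonneg measurableSet_Icc
      (fun t _ => abs_nonneg _)
    have h2 : 0 ≤ ∫ s in I, |pd2 v (x₁, s)| := setIntegral_nonneg measurableSet_Icc
      (fun s _ => abs_nonneg _)
    positivity
  -- integrability of iterated pieces
  have hIexp' : Integrable (fun x : ℝ × ℝ => Real.exp (-δ * x.2 / ε) * |v x|)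
      (((volume : Measure ℝ).restrict I).prod ((volume : Measure ℝ).restrict I)) := by
    rw [Measure.prod_restrict]; rw [hvol] at hIexp; exact hIexp
  have hIv' : Integrable (fun x : ℝ × ℝ => |v x|)
      (((volume : Measure ℝ).restrict I).prod ((volume : Measure ℝ).restrict I)) := by
    rw [Measure.prod_restrict]; rw [hvol] at hIv; exact hIv
  have hIp' : Integrable (fun x : ℝ × ℝ => |pd2 v x|)
      (((volume : Measure ℝ).restrict I).prod ((volume : Measure ℝ).restrict I)) := by
    rw [Measure.prod_restrict]; rw [hvol] at hIp; exact hIp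
  have hGint : Integrable (fun x₁ => ∫ x₂ in I, Real.exp (-δ * x₂ / ε) * |v (x₁, x₂)|)
      ((volume : Measure ℝ).restrict I) := hIexp'.integral_prod_left
  have hFvint : Integrable (fun x₁ => ∫ t in I, |v (x₁, t)|)
      ((volume : Measure ℝ).restrict I) := hIv'.integral_prod_left
  have hFpint : Integrable (fun x₁ => ∫ s in I, |pd2 v (x₁, s)|)
      ((volume : Measure ℝ).restrict I) := hIp'.integral_prod_left
  have hFint : Integrable F ((volume : Measure ℝ).restrict I) := hFvint.add hFpint
  -- the exponential integral bound
  have hexp : ∫ x₂ in I, Real.exp (-δ * x₂ / ε) ≤ ε / δ := by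
    have hc : 0 < δ / ε := div_pos hδ hε
    have := exp_int_le (δ / ε) hc
    have heq : ∀ x₂ : ℝ, -δ * x₂ / ε = -(δ / ε) * x₂ := by intro x₂; ring
    simp_rw [heq]
    calc ∫ x₂ in I, Real.exp (-(δ / ε) * x₂) ≤ 1 / (δ / ε) := this
      _ = ε / δ := by field_simp
  -- per-x₁ bound
  have hper : ∀ x₁ ∈ I,
      (∫ x₂ in I, Real.exp (-δ * x₂ / ε) * |v (x₁, x₂)|) ≤ (ε / δ) * F x₁ := by
    intro x₁ hx₁
    have hexpcont : ContinuousOn (fun x₂ : ℝ => Real.exp (-δ * x₂ / ε)) I :=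
      (Real.continuous_exp.comp ((continuous_const.mul continuous_id).div_const ε)).continuousOn
    have hint1 : IntegrableOn (fun x₂ => Real.exp (-δ * x₂ / ε) * |v (x₁, x₂)|) I :=
      (hexpcont.mul (hsliceV x₁ hx₁).abs).integrableOn_compact isCompact_Icc
    have hint2 : IntegrableOn (fun x₂ => Real.exp (-δ * x₂ / ε) * F x₁) I :=
      (hexpcont.mul continuousOn_const).integrableOn_compact isCompact_Icc
    calc (∫ x₂ in I, Real.exp (-δ * x₂ / ε) * |v (x₁, x₂)|)
        ≤ ∫ x₂ in I, Real.exp (-δ * x₂ / ε) * F x₁ := by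
          apply setIntegral_mono_on hint1 hint2 measurableSet_Icc
          intro x₂ hx₂
          exact mul_le_mul_of_nonneg_left (key x₁ hx₁ x₂ hx₂) (Real.exp_pos _).le
      _ = (∫ x₂ in I, Real.exp (-δ * x₂ / ε)) * F x₁ := by
          rw [integral_mul_const]
      _ ≤ (ε / δ) * F x₁ := mul_le_mul_of_nonneg_right hexp (hFnonneg x₁)
  -- put everything together
  have hLHS : (∫ x in K, Real.exp (-δ * x.2 / ε) * |v x|)
      = ∫ x₁ in I, ∫ x₂ in I, Real.exp (-δ * x₂ / ε) * |v (x₁, x₂)| := by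
    rw [hvol]
    exact setIntegral_prod _ (by rw [← hvol]; exact hIexp)
  have hRv : (∫ x in K, |v x|) = ∫ x₁ in I, ∫ t in I, |v (x₁, t)| := by
    rw [hvol]
    exact setIntegral_prod _ (by rw [← hvol]; exact hIv)
  have hRp : (∫ x in K, |pd2 v x|) = ∫ x₁ in I, ∫ s in I, |pd2 v (x₁, s)| := by
    rw [hvol]
    exact setIntegral_prod _ (by rw [← hvol]; exact hIp)
  rw [hLHS, hRv, hRp]
  calc (∫ x₁ in I, ∫ x₂ in I, Real.exp (-δ * x₂ / ε) * |v (x₁, x₂)|)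
      ≤ ∫ x₁ in I, (ε / δ) * F x₁ := by
        apply setIntegral_mono_on hGint (hFint.const_mul _) measurableSet_Icc hper
    _ = (ε / δ) * ∫ x₁ in I, F x₁ := by rw [integral_const_mul]
    _ = (ε / δ) * ((∫ x₁ in I, ∫ t in I, |v (x₁, t)|) +
        ∫ x₁ in I, ∫ s in I, |pd2 v (x₁, s)|) := by
        rw [hF, integral_add hFvint hFpint]
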